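/- Let P̂ be symmetric with 0 ⪯ P̂ ⪯ I, eigen-decomposition P̂ = ∑_j λ̂_j θ̂_j θ̂_jᵀ with λ̂_1 ≥ … ≥ λ̂_d, Π̂ = ∑_{j≤m} θ̂_j θ̂_jᵀ, and let Π* be any symmetric PSD matrix. Then trace[(I − P̂)Π*] ≥ (1 − λ̂_{m+1}) · trace[(I − Π̂)Π*]. -/

import Mathlib

open Matrix

theorem stmt7 (d m : ℕ) (hm1 : 1 ≤ m) (hmd : m < d)
    (P : Matrix (Fin d) (Fin d) ℝ) (hsym : P.IsSymm)
    (hP : P.PosSemidef) (hPI : (1 - P).PosSemidef)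
    (lam : Fin d → ℝ) (θ : Fin d → Fin d → ℝ)
    (horth : ∀ i j, θ i ⬝ᵥ θ j = if i = j then (1 : ℝ) else 0)
    (hdecomp : P = ∑ j, lam j • vecMulVec (θ j) (θ j))
    (hanti : Antitone lam)
    (Pis : Matrix (Fin d) (Fin d) ℝ) (hPis : Pis.PosSemidef) :
    ((1 - P) * Pis).trace ≥
      (1 - lam ⟨m, hmd⟩) *
        (((1 : Matrix (Fin d) (Fin d) ℝ) -
          ∑ j ∈ Finset.univ.filter (fun j : Fin d => (j : ℕ) < m),
            vecMulVec (θ j) (θ j)) * Pis).trace := by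
  set q : Fin d → ℝ := fun j => θ j ⬝ᵥ (Pis *ᵥ θ j) with hq
  -- q is nonnegative
  have hqnn : ∀ j, 0 ≤ q j := fun j => by simpa using hPis.dotProduct_mulVec_nonneg (θ j)
  -- P acts on θ j as lam j
  have hPv : ∀ j, P *ᵥ θ j = lam j • θ j := by
    intro j
    rw [hdecomp]
    ext i
    simp only [mulVec, dotProduct, Finset.sum_apply, Matrix.sum_apply,
      Matrix.smul_apply, vecMulVec_apply, smul_eq_mul, Finset.sum_mul]
    rw [Finset.sum_comm]
    have : ∀ k, ∑ x, lam k * (θ k i * θ k x) * θ j x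
        = lam k * (θ k ⬝ᵥ θ j) * θ k i := by
      intro k
      simp only [dotProduct, Finset.mul_sum, Finset.sum_mul]
      exact Finset.sum_congr rfl fun x _ => by ring
    simp only [this, horth]
    rw [Finset.sum_eq_single j]
    · simp
    · intro b _ hb; simp [hb]
    · simp
  have hlam_eq : ∀ j, θ j ⬝ᵥ (P *ᵥ θ j) = lam j := by
    intro j
    rw [hPv, dotProduct_smul, horth]
    simp
  -- lam j ≤ 1
  have hlam_le : ∀ j, lam j ≤ 1 := by
    intro j
    have h := hPI.dotProduct_mulVec_nonneg (θ j)
    simp only [star_trivial, sub_mulVec, one_mulVec, dotProduct_sub, hlam_eq, horth] at h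
    simp at h
    linarith
  -- decomposition of identity
  have hone : (1 : Matrix (Fin d) (Fin d) ℝ) = ∑ j, vecMulVec (θ j) (θ j) := by
    let M : Matrix (Fin d) (Fin d) ℝ := Matrix.of θ
    have hMMt : M * Mᵀ = 1 := by
      ext i j
      simp only [Matrix.mul_apply, transpose_apply, Matrix.one_apply, M, of_apply]
      simpa [dotProduct] using horth i j
    have hMtM : Mᵀ * M = 1 := mul_eq_one_comm.mp hMMt
    rw [← hMtM]
    ext a b
    simp [Matrix.mul_apply, Matrix.sum_apply, vecMulVec_apply, M, mul_comm]
  -- trace of rank one times Pis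
  have htr : ∀ u : Fin d → ℝ, (vecMulVec u u * Pis).trace = u ⬝ᵥ (Pis *ᵥ u) := by
    intro u
    simp only [trace, diag_apply, Matrix.mul_apply, vecMulVec_apply, dotProduct, mulVec]
    rw [Finset.sum_comm]
    exact Finset.sum_congr rfl fun k _ => by
      simp [dotProduct, Finset.mul_sum]
      exact Finset.sum_congr rfl fun i _ => by ring
  -- LHS computation
  have hLHS : ((1 - P) * Pis).trace = ∑ j, (1 - lam j) * q j := by
    have h1 : (1 : Matrix (Fin d) (Fin d) ℝ) - P
        = ∑ j, (1 - lam j) • vecMulVec (θ j) (θ j) := by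
      rw [hdecomp]
      conv_lhs => rw [hone]
      rw [← Finset.sum_sub_distrib]
      exact Finset.sum_congr rfl fun j _ => by rw [sub_smul, one_smul]
    rw [h1, Finset.sum_mul, trace_sum]
    exact Finset.sum_congr rfl fun j _ => by
      rw [smul_mul_assoc, trace_smul, htr, smul_eq_mul]
  -- RHS computation
  set T : Finset (Fin d) := Finset.univ.filter (fun j : Fin d => ¬ (j : ℕ) < m) with hT
  have hRHS : (((1 : Matrix (Fin d) (Fin d) ℝ) -
      ∑ j ∈ Finset.univ.filter (fun j : Fin d => (j : ℕ) < m),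
        vecMulVec (θ j) (θ j)) * Pis).trace = ∑ j ∈ T, q j := by
    have h2 : (1 : Matrix (Fin d) (Fin d) ℝ) -
        ∑ j ∈ Finset.univ.filter (fun j : Fin d => (j : ℕ) < m),
          vecMulVec (θ j) (θ j) = ∑ j ∈ T, vecMulVec (θ j) (θ j) := by
      conv_lhs => rw [hone]
      rw [← Finset.sum_filter_add_sum_filter_not Finset.univ (fun j : Fin d => (j : ℕ) < m)]
      simp [hT]
    rw [h2, Finset.sum_mul, trace_sum]
    exact Finset.sum_congr rfl fun j _ => htr (θ j)
  rw [hLHS, hRHS, ge_iff_le, Finset.mul_sum]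
  calc ∑ j ∈ T, (1 - lam ⟨m, hmd⟩) * q j
      ≤ ∑ j ∈ T, (1 - lam j) * q j := by
        apply Finset.sum_le_sum
        intro j hj
        apply mul_le_mul_of_nonneg_right _ (hqnn j)
        have hmj : (⟨m, hmd⟩ : Fin d) ≤ j := by
          simp [hT, Finset.mem_filter] at hj
          exact Fin.mk_le_of_le_val hj
        linarith [hanti hmj]
    _ ≤ ∑ j, (1 - lam j) * q j := by
        apply Finset.sum_le_sum_of_subset_of_nonneg (Finset.subset_univ T)
        intro j _ _
        exact mul_nonneg (by linarith [hlam_le j]) (hqnn j)
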